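/- Let A = [[A₁₁, A₁₂],[A₂₁, A₂₂]] be bounded on H₊ ⊕ H₋, μ with A₂₂ - μ invertible, F = (A₂₂-μ)⁻¹A₂₁, G = A₁₂(A₂₂-μ)⁻¹, S = A₁₁ - A₁₂(A₂₂-μ)⁻¹A₂₁, and K : H₊ → H₋ bounded. Then the graph of K is invariant under A if and only if (1 - KG)(A₂₂ - μ)(F + K) = K(S - μ). -/
import Mathlib


/-- With `A = [[A₁₁,A₁₂],[A₂₁,A₂₂]]` bounded on `H₊ ⊕ H₋`,
`A₂₂ - μ` boundedly invertible (inverse `R`), `F = RA₂₁`, `G = A₁₂R`,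
`S = A₁₁ - A₁₂RA₂₁`, and `K : H₊ → H₋` bounded, the graph `{(x₊,Kx₊)}` is
`A`-invariant iff `(1 - KG)(A₂₂ - μ)(F + K) = K(S - μ)`. -/
theorem stmt18 {E F : Type*} [NormedAddCommGroup E] [InnerProductSpace ℂ E]
    [NormedAddCommGroup F] [InnerProductSpace ℂ F]
    (A₁₁ : E →L[ℂ] E) (A₁₂ : F →L[ℂ] E) (A₂₁ : E →L[ℂ] F) (A₂₂ : F →L[ℂ] F)
    (μ : ℂ) (R : F →L[ℂ] F)
    (hR₁ : (A₂₂ - μ • 1) ∘L R = 1) (hR₂ : R ∘L (A₂₂ - μ • 1) = 1)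
    (Fop : E →L[ℂ] F) (hF : Fop = R ∘L A₂₁)
    (G : F →L[ℂ] E) (hG : G = A₁₂ ∘L R)
    (S : E →L[ℂ] E) (hS : S = A₁₁ - A₁₂ ∘L R ∘L A₂₁)
    (K : E →L[ℂ] F) :
    (∀ xp : E, A₂₁ xp + A₂₂ (K xp) = K (A₁₁ xp + A₁₂ (K xp))) ↔
      (1 - K ∘L G) ∘L (A₂₂ - μ • 1) ∘L (Fop + K) = K ∘L (S - μ • 1) := by
  subst hF hG hS
  have h1 : ∀ y : F, (A₂₂ - μ • 1) (R y) = y := by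
    intro y
    have := ContinuousLinearMap.ext_iff.mp hR₁ y
    simpa using this
  have h2 : ∀ y : F, R (A₂₂ y - μ • y) = y := by
    intro y
    have := ContinuousLinearMap.ext_iff.mp hR₂ y
    simpa using this
  have hL : ∀ x : E, ((1 - K ∘L (A₁₂ ∘L R)) ∘L (A₂₂ - μ • 1) ∘L (R ∘L A₂₁ + K)) x
      = A₂₁ x + (A₂₂ (K x) - μ • K x) - (K (A₁₂ (R (A₂₁ x))) + K (A₁₂ (K x))) := by
    intro x
    simp only [ContinuousLinearMap.comp_apply, ContinuousLinearMap.add_apply, map_add, h1]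
    simp only [ContinuousLinearMap.sub_apply, ContinuousLinearMap.one_apply,
      ContinuousLinearMap.smul_apply, ContinuousLinearMap.comp_apply, map_add]
    rw [h2]
    abel
  rw [ContinuousLinearMap.ext_iff]
  apply forall_congr'
  intro x
  rw [hL x]
  simp only [ContinuousLinearMap.comp_apply, ContinuousLinearMap.sub_apply,
    ContinuousLinearMap.smul_apply, ContinuousLinearMap.one_apply, map_add, map_sub, map_smul]
  rw [← sub_eq_zero, ← sub_eq_zero (b := K (A₁₁ x) - K (A₁₂ (R (A₂₁ x))) - μ • K x)]
  constructor
  · intro h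
    rw [show A₂₁ x + (A₂₂ (K x) - μ • K x) - (K (A₁₂ (R (A₂₁ x))) + K (A₁₂ (K x))) -
        (K (A₁₁ x) - K (A₁₂ (R (A₂₁ x))) - μ • K x)
        = A₂₁ x + A₂₂ (K x) - (K (A₁₁ x) + K (A₁₂ (K x))) by abel, h]
  · intro h
    rw [show A₂₁ x + A₂₂ (K x) - (K (A₁₁ x) + K (A₁₂ (K x)))
        = A₂₁ x + (A₂₂ (K x) - μ • K x) - (K (A₁₂ (R (A₂₁ x))) + K (A₁₂ (K x))) -
        (K (A₁₁ x) - K (A₁₂ (R (A₂₁ x))) - μ • K x) by abel, h]
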